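/- Let w ∈ A₂ on ℝ. Then for every dyadic interval J: Σ_{K⊆J} (⟨w^{-1},h_K⟩)² / ⟨w^{-1}⟩_K² ≲ [w]_{A₂} |J|. -/

import Mathlib

open MeasureTheory Set
open scoped ENNReal

noncomputable section

/-- The dyadic interval `[k·2^n, (k+1)·2^n)` encoded by the pair `p = (n, k)`. -/
def dyad (p : ℤ × ℤ) : Set ℝ := Set.Ico ((p.2 : ℝ) * 2 ^ p.1) (((p.2 : ℝ) + 1) * 2 ^ p.1)

/-- Left half of a dyadic interval. -/
def dLeft (p : ℤ × ℤ) : ℤ × ℤ := (p.1 - 1, 2 * p.2)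

/-- Right half of a dyadic interval. -/
def dRight (p : ℤ × ℤ) : ℤ × ℤ := (p.1 - 1, 2 * p.2 + 1)

/-- Dyadic parent. -/
def dParent (p : ℤ × ℤ) : ℤ × ℤ := (p.1 + 1, Int.fdiv p.2 2)

/-- Length of the dyadic interval. -/
def dLen (p : ℤ × ℤ) : ℝ := 2 ^ p.1

/-- The L²-normalized Haar function `h_I = |I|^{-1/2}(1_{I₋} - 1_{I₊})`. -/
def haarF (p : ℤ × ℤ) : ℝ → ℝ := fun x =>
  (Real.sqrt (dLen p))⁻¹ *
    ((dyad (dLeft p)).indicator (fun _ => (1 : ℝ)) x -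
      (dyad (dRight p)).indicator (fun _ => (1 : ℝ)) x)

/-- The averaging function `h_I^1 = |I|^{-1} 1_I`. -/
def haarAvg (p : ℤ × ℤ) : ℝ → ℝ := fun x =>
  (dLen p)⁻¹ * (dyad p).indicator (fun _ => (1 : ℝ)) x

/-- Haar coefficient `⟨f, h_I⟩`. -/
def hc (f : ℝ → ℝ) (p : ℤ × ℤ) : ℝ := ∫ x, f x * haarF p x

/-- Average `⟨f⟩_I = |I|⁻¹ ∫_I f`. -/
def avg (f : ℝ → ℝ) (p : ℤ × ℤ) : ℝ := (dLen p)⁻¹ * ∫ x in dyad p, f x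

open Classical in
/-- `δ(J, I) = 1` if `J ⊆ I₋` and `-1` otherwise (in particular if `J ⊆ I₊`). -/
def dsgn (q p : ℤ × ℤ) : ℝ := if dyad q ⊆ dyad (dLeft p) then 1 else -1

/-- `𝔰(J) = √2 · Σ_{K : K₋ ⊋ J} |K|⁻¹`. -/
def sfrak (p : ℤ × ℤ) : ℝ :=
  Real.sqrt 2 * ∑' q : {q : ℤ × ℤ // dyad p ⊂ dyad (dLeft q)}, (dLen q.1)⁻¹

lemma dLen_pos (p : ℤ × ℤ) : (0:ℝ) < dLen p := zpow_pos (by norm_num) _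

lemma dyad_lt (p : ℤ × ℤ) : (p.2 : ℝ) * 2 ^ p.1 < ((p.2 : ℝ) + 1) * 2 ^ p.1 := by
  have := dLen_pos p
  unfold dLen at this
  nlinarith

lemma dyad_nonempty (p : ℤ × ℤ) : (dyad p).Nonempty := by
  exact Set.nonempty_Ico.2 (dyad_lt p)

lemma volume_dyad (p : ℤ × ℤ) : volume (dyad p) = ENNReal.ofReal (dLen p) := by
  rw [dyad, Real.volume_Ico]
  congr 1
  unfold dLen
  ring

lemma measurableSet_dyad (p : ℤ × ℤ) : MeasurableSet (dyad p) := measurableSet_Ico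

lemma dLen_left (p : ℤ × ℤ) : dLen (dLeft p) = dLen p / 2 := by
  unfold dLen dLeft
  simp only
  rw [zpow_sub₀ (by norm_num : (2:ℝ) ≠ 0)]
  norm_num

lemma dLen_right (p : ℤ × ℤ) : dLen (dRight p) = dLen p / 2 := by
  unfold dLen dRight
  simp only
  rw [zpow_sub₀ (by norm_num : (2:ℝ) ≠ 0)]
  norm_num

lemma two_zpow_sub_one (n : ℤ) : (2:ℝ) ^ (n-1) * 2 = 2 ^ n := by
  rw [zpow_sub₀ (by norm_num : (2:ℝ) ≠ 0)]
  ring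

lemma dyad_left_eq (p : ℤ × ℤ) :
    dyad (dLeft p) = Set.Ico ((p.2 : ℝ) * 2 ^ p.1) (((2*p.2 : ℤ) + 1 : ℝ) * 2 ^ (p.1 - 1)) := by
  have h2 := two_zpow_sub_one p.1
  have e1 : ((dLeft p).2 : ℝ) * 2 ^ (dLeft p).1 = (p.2:ℝ) * 2^p.1 := by
    simp only [dLeft]; try push_cast; try linear_combination (p.2 : ℝ) * h2
  have e2 : (((dLeft p).2:ℝ)+1) * 2 ^ (dLeft p).1 = ((2*p.2 : ℤ) + 1 : ℝ) * 2 ^ (p.1-1) := by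
    simp only [dLeft]; try push_cast; try ring
  rw [dyad, e1, e2]

lemma dyad_right_eq (p : ℤ × ℤ) :
    dyad (dRight p) = Set.Ico (((2*p.2 : ℤ) + 1 : ℝ) * 2 ^ (p.1 - 1)) (((p.2 : ℝ) + 1) * 2 ^ p.1) := by
  have h2 := two_zpow_sub_one p.1
  have e1 : ((dRight p).2 : ℝ) * 2 ^ (dRight p).1 = ((2*p.2 : ℤ) + 1 : ℝ) * 2 ^ (p.1-1) := by
    simp only [dRight]; try push_cast; try ring
  have e2 : (((dRight p).2:ℝ)+1) * 2 ^ (dRight p).1 = ((p.2:ℝ)+1) * 2^p.1 := by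
    simp only [dRight]; try push_cast; try linear_combination ((p.2 : ℝ)+1) * h2
  rw [dyad, e1, e2]

lemma mid_mem (p : ℤ × ℤ) :
    (p.2 : ℝ) * 2 ^ p.1 ≤ ((2*p.2 : ℤ) + 1 : ℝ) * 2 ^ (p.1 - 1) ∧
    ((2*p.2 : ℤ) + 1 : ℝ) * 2 ^ (p.1 - 1) ≤ ((p.2 : ℝ) + 1) * 2 ^ p.1 := by
  have h2 := two_zpow_sub_one p.1
  have hp : (0:ℝ) < 2 ^ (p.1 - 1) := zpow_pos (by norm_num) _
  have e : (p.2:ℝ) * 2^p.1 = 2*(p.2:ℝ) * 2^(p.1-1) := by rw [← h2]; ring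
  have e2 : ((p.2:ℝ)+1) * 2^p.1 = (2*(p.2:ℝ)+2) * 2^(p.1-1) := by rw [← h2]; ring
  constructor <;> push_cast <;> [rw [e]; rw [e2]] <;> nlinarith

lemma dyad_split (p : ℤ × ℤ) : dyad (dLeft p) ∪ dyad (dRight p) = dyad p := by
  rw [dyad_left_eq, dyad_right_eq, dyad]
  exact Set.Ico_union_Ico_eq_Ico (mid_mem p).1 (mid_mem p).2

lemma dyad_disj (p : ℤ × ℤ) : Disjoint (dyad (dLeft p)) (dyad (dRight p)) := by
  rw [dyad_left_eq, dyad_right_eq]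
  exact Set.Ico_disjoint_Ico_same

lemma dyad_sub_iff {q p : ℤ × ℤ} : dyad q ⊆ dyad p ↔
    (p.2 : ℝ) * 2 ^ p.1 ≤ (q.2 : ℝ) * 2 ^ q.1 ∧
      ((q.2 : ℝ) + 1) * 2 ^ q.1 ≤ ((p.2 : ℝ) + 1) * 2 ^ p.1 := by
  rw [dyad, dyad, Set.Ico_subset_Ico_iff (dyad_lt q)]

lemma dyad_scale_le {q p : ℤ × ℤ} (h : dyad q ⊆ dyad p) : q.1 ≤ p.1 := by
  rcases dyad_sub_iff.1 h with ⟨h1, h2⟩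
  have hlen : (2:ℝ) ^ q.1 ≤ 2 ^ p.1 := by nlinarith
  exact le_of_not_gt fun hlt => absurd hlen (not_le.2 (zpow_lt_zpow_right₀ (by norm_num) hlt))

lemma dyad_trichotomy {q p : ℤ × ℤ} (h : dyad q ⊆ dyad p) :
    q = p ∨ dyad q ⊆ dyad (dLeft p) ∨ dyad q ⊆ dyad (dRight p) := by
  rcases dyad_sub_iff.1 h with ⟨h1, h2⟩
  have hm := dyad_scale_le h
  rcases eq_or_lt_of_le hm with heq | hlt
  · left
    have hpow : (0:ℝ) < 2 ^ p.1 := zpow_pos (by norm_num) _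
    rw [heq] at h1 h2
    have : (q.2 : ℝ) = p.2 := by nlinarith
    have : q.2 = p.2 := by exact_mod_cast this
    exact Prod.ext heq this
  · right
    have hq1 : q.1 ≤ p.1 - 1 := by omega
    set c : ℤ := (2 * p.2 + 1) * 2 ^ (p.1 - 1 - q.1).toNat with hc
    have hc' : (c:ℝ) = (2*(p.2:ℝ)+1) * 2^(p.1-1-q.1) := by
      rw [hc]
      push_cast
      rw [← zpow_natCast (2:ℝ), Int.toNat_of_nonneg (by omega : (0:ℤ) ≤ p.1 - 1 - q.1)]
    have hcast : (c : ℝ) * 2 ^ q.1 = ((2 * p.2 : ℤ) + 1 : ℝ) * 2 ^ (p.1 - 1) := by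
      rw [hc', mul_assoc, ← zpow_add₀ (by norm_num : (2:ℝ) ≠ 0)]
      push_cast
      congr 2
      omega
    have hqpow : (0:ℝ) < 2 ^ q.1 := zpow_pos (by norm_num) _
    by_cases hside : q.2 + 1 ≤ c
    · left
      rw [dyad_left_eq, dyad]
      apply Set.Ico_subset_Ico h1
      rw [← hcast]
      have : ((q.2 : ℝ) + 1) ≤ (c : ℝ) := by exact_mod_cast hside
      nlinarith
    · right
      rw [dyad_right_eq, dyad]
      apply Set.Ico_subset_Ico _ h2
      rw [← hcast]
      have : (c : ℝ) ≤ (q.2 : ℝ) := by exact_mod_cast (by omega : c ≤ q.2)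
      nlinarith

lemma dyad_inj {q p : ℤ × ℤ} (h : dyad q = dyad p) : q = p := by
  rcases dyad_trichotomy (le_of_eq h) with h1 | h1 | h1
  · exact h1
  · exfalso
    have hs : dyad p ⊆ dyad (dLeft p) := h ▸ h1
    have := dyad_scale_le hs
    simp only [dLeft] at this
    omega
  · exfalso
    have hs : dyad p ⊆ dyad (dRight p) := h ▸ h1
    have := dyad_scale_le hs
    simp only [dRight] at this
    omega

lemma dyad_sub_left_scale {q p : ℤ × ℤ} (h : dyad q ⊆ dyad (dLeft p)) : q.1 ≤ p.1 - 1 := by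
  have := dyad_scale_le h
  simpa [dLeft] using this

lemma dyad_sub_right_scale {q p : ℤ × ℤ} (h : dyad q ⊆ dyad (dRight p)) : q.1 ≤ p.1 - 1 := by
  have := dyad_scale_le h
  simpa [dRight] using this

lemma integrableOn_dyad {f : ℝ → ℝ} (hf : LocallyIntegrable f volume) (p : ℤ × ℤ) :
    IntegrableOn f (dyad p) volume :=
  (hf.integrableOn_isCompact isCompact_Icc).mono_set Set.Ico_subset_Icc_self

lemma setInt_split {f : ℝ → ℝ} (hf : LocallyIntegrable f volume) (p : ℤ × ℤ) :
    ∫ x in dyad p, f x = (∫ x in dyad (dLeft p), f x) + ∫ x in dyad (dRight p), f x := by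
  rw [← dyad_split p,
    setIntegral_union (dyad_disj p) (measurableSet_dyad _) (integrableOn_dyad hf _)
      (integrableOn_dyad hf _)]

lemma avg_split {f : ℝ → ℝ} (hf : LocallyIntegrable f volume) (p : ℤ × ℤ) :
    avg f p = (avg f (dLeft p) + avg f (dRight p)) / 2 := by
  have hl := dLen_left p
  have hr := dLen_right p
  have hpos := dLen_pos p
  rw [avg, avg, avg, setInt_split hf p, hl, hr]
  field_simp

lemma hc_eq {f : ℝ → ℝ} (hf : LocallyIntegrable f volume) (p : ℤ × ℤ) :
    hc f p = (Real.sqrt (dLen p))⁻¹ *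
      ((∫ x in dyad (dLeft p), f x) - ∫ x in dyad (dRight p), f x) := by
  have e : ∀ x, f x * haarF p x = (Real.sqrt (dLen p))⁻¹ *
      ((dyad (dLeft p)).indicator f x - (dyad (dRight p)).indicator f x) := by
    intro x
    simp only [haarF, Set.indicator]
    by_cases hx1 : x ∈ dyad (dLeft p) <;> by_cases hx2 : x ∈ dyad (dRight p) <;>
      simp [hx1, hx2] <;> ring
  have hintL : Integrable ((dyad (dLeft p)).indicator f) volume :=
    (integrable_indicator_iff (measurableSet_dyad _)).2 (integrableOn_dyad hf _)
  have hintR : Integrable ((dyad (dRight p)).indicator f) volume :=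
    (integrable_indicator_iff (measurableSet_dyad _)).2 (integrableOn_dyad hf _)
  rw [hc]
  simp_rw [e]
  rw [MeasureTheory.integral_const_mul, integral_sub hintL hintR,
    integral_indicator (measurableSet_dyad _), integral_indicator (measurableSet_dyad _)]

lemma setInt_pos {f : ℝ → ℝ} (hf : LocallyIntegrable f volume) (hpos : ∀ x, 0 < f x)
    (p : ℤ × ℤ) : 0 < ∫ x in dyad p, f x := by
  rw [setIntegral_pos_iff_support_of_nonneg_ae
    (Filter.Eventually.of_forall fun x => (hpos x).le) (integrableOn_dyad hf p)]
  have : Function.support f = Set.univ := by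
    ext x; simp [Function.support, (hpos x).ne']
  rw [this, Set.univ_inter, volume_dyad]
  simp [dLen_pos p]

lemma avg_pos {f : ℝ → ℝ} (hf : LocallyIntegrable f volume) (hpos : ∀ x, 0 < f x)
    (p : ℤ × ℤ) : 0 < avg f p :=
  mul_pos (inv_pos.2 (dLen_pos p)) (setInt_pos hf hpos p)
lemma key_alg (P Q R S : ℝ) (hP : 0 < P) (hQ : 0 < Q) (hR : 0 < R) (hS : 0 < S) :
    2*(R-S)^2 / ((P+Q)*(R+S)^3) ≤ 1/(2*P*R) + 1/(2*Q*S) - 4/((P+Q)*(R+S)) := by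
  set U := P + Q with hUdef
  set T := R + S with hTdef
  have hU0 : 0 < U := by positivity
  have hT0 : 0 < T := by positivity
  set e1 := Real.sqrt (P*Q) with he1def
  set e2 := Real.sqrt (R*S) with he2def
  have he1 : e1^2 = P*Q := Real.sq_sqrt (by positivity)
  have he2 : e2^2 = R*S := Real.sq_sqrt (by positivity)
  have he1p : 0 < e1 := Real.sqrt_pos.2 (by positivity)
  have he2p : 0 < e2 := Real.sqrt_pos.2 (by positivity)
  have hU2 : 2*e1 ≤ U := by nlinarith [sq_nonneg (P-Q)]
  have hT2 : 2*e2 ≤ T := by nlinarith [sq_nonneg (R-S)]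
  have heprod : (e1*e2)^2 = (P*R)*(Q*S) := by rw [mul_pow, he1, he2]; ring
  have he12 : e1*e2 = Real.sqrt (P*R) * Real.sqrt (Q*S) := by
    rw [he1def, he2def, ← Real.sqrt_mul (by positivity) , ← Real.sqrt_mul (by positivity)]
    congr 1
    ring
  have hPRQS : 2*(e1*e2) ≤ P*R + Q*S := by
    rw [he12]
    have h1 := two_mul_le_add_sq (Real.sqrt (P*R)) (Real.sqrt (Q*S))
    rw [Real.sq_sqrt (by positivity : (0:ℝ) ≤ P*R), Real.sq_sqrt (by positivity : (0:ℝ) ≤ Q*S)] at h1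
    linarith
  have hA : 1/(e1*e2) ≤ 1/(2*P*R) + 1/(2*Q*S) := by
    have hsum : 1/(2*P*R) + 1/(2*Q*S) = (P*R+Q*S)/(2*((e1*e2)^2)) := by
      rw [heprod]
      field_simp
      ring
    rw [hsum, div_le_div_iff₀ (by positivity) (by positivity)]
    nlinarith [mul_pos he1p he2p]
  have hB : 2*(T-2*e2)/(U*T*e2) ≤ 1/(e1*e2) - 4/(U*T) := by
    have hUT4 : 2*e1*(T-2*e2) ≤ U*T - 4*(e1*e2) := by
      nlinarith [mul_nonneg (sub_nonneg.2 hU2) hT0.le]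
    have heq1 : 2*(T-2*e2)/(U*T*e2) = (2*e1*(T-2*e2))/(U*T*(e1*e2)) := by
      rw [div_eq_div_iff (by positivity) (by positivity)]
      ring
    have heq2 : 1/(e1*e2) - 4/(U*T) = (U*T - 4*(e1*e2))/(U*T*(e1*e2)) := by
      field_simp
    rw [heq1, heq2]
    gcongr
  have hC : 2*(R-S)^2 / (U*T^3) ≤ 2*(T-2*e2)/(U*T*e2) := by
    rw [div_le_div_iff₀ (by positivity) (by positivity)]
    have hid : (R-S)^2 = T^2 - 4*e2^2 := by rw [he2]; ring
    have hid2 : 2*(R-S)^2*(U*T*e2) = 2*(T^2-4*e2^2)*(U*T*e2) := by rw [hid]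
    nlinarith [hid2, mul_nonneg (mul_nonneg (mul_nonneg hU0.le hT0.le) (sq_nonneg (T - 2*e2)))
      (by positivity : (0:ℝ) ≤ T + e2)]
  calc 2*(R-S)^2 / (U*T^3) ≤ 2*(T-2*e2)/(U*T*e2) := hC
    _ ≤ 1/(e1*e2) - 4/(U*T) := hB
    _ ≤ 1/(2*P*R) + 1/(2*Q*S) - 4/(U*T) := by linarith

variable {w : ℝ → ℝ}

lemma one_le_avg_mul (hw : ∀ x, 0 < w x) (hwi : LocallyIntegrable w volume)
    (hvi : LocallyIntegrable (fun x => (w x)⁻¹) volume) (p : ℤ × ℤ) :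
    1 ≤ avg w p * avg (fun x => (w x)⁻¹) p := by
  have hv : ∀ x, 0 < (w x)⁻¹ := fun x => inv_pos.2 (hw x)
  set ℓ := dLen p with hl
  have hl0 : 0 < ℓ := dLen_pos p
  set X := ∫ x in dyad p, w x with hX
  set Y := ∫ x in dyad p, (w x)⁻¹ with hY
  have hX0 : 0 < X := setInt_pos hwi hw p
  have hY0 : 0 < Y := setInt_pos hvi hv p
  have hmain : ∀ t : ℝ, 0 < t → 2*ℓ ≤ t*X + t⁻¹*Y := by
    intro t ht
    have pt : ∀ x : ℝ, 2 ≤ t * w x + t⁻¹ * (w x)⁻¹ := by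
      intro x
      have hwx := hw x
      have h1 : t⁻¹ * (w x)⁻¹ = (t * w x)⁻¹ := by rw [mul_inv]
      rw [h1]
      set u := t * w x with hu
      have hu0 : 0 < u := mul_pos ht hwx
      have hinv : u * u⁻¹ = 1 := mul_inv_cancel₀ hu0.ne'
      nlinarith [sq_nonneg (u - 1), mul_pos hu0 (inv_pos.2 hu0)]
    have i1 : IntegrableOn (fun x => t * w x + t⁻¹ * (w x)⁻¹) (dyad p) volume :=
      ((integrableOn_dyad hwi p).const_mul t).add ((integrableOn_dyad hvi p).const_mul t⁻¹)
    have i0 : IntegrableOn (fun _ : ℝ => (2:ℝ)) (dyad p) volume :=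
      integrableOn_const (by rw [volume_dyad]; exact ENNReal.ofReal_ne_top)
    have hmono := setIntegral_mono_on i0 i1 (measurableSet_dyad p) (fun x _ => pt x)
    rw [setIntegral_const, smul_eq_mul, Measure.real, volume_dyad, ENNReal.toReal_ofReal hl0.le] at hmono
    rw [integral_add ((integrableOn_dyad hwi p).const_mul t)
      ((integrableOn_dyad hvi p).const_mul t⁻¹), MeasureTheory.integral_const_mul,
      MeasureTheory.integral_const_mul] at hmono
    linarith [hmono]
  have h2 := hmain (ℓ / X) (div_pos hl0 hX0)
  have ht1 : (ℓ / X) * X = ℓ := by field_simp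
  have ht2 : (ℓ / X)⁻¹ * Y = X * Y / ℓ := by
    rw [inv_div]
    field_simp
    try ring
  rw [ht1, ht2] at h2
  have hXY : ℓ * ℓ ≤ X * Y := by
    have hcanc : X * Y / ℓ * ℓ = X * Y := div_mul_cancel₀ _ hl0.ne'
    nlinarith [hcanc, mul_le_mul_of_nonneg_right h2 hl0.le]
  rw [avg, avg, ← hX, ← hY, ← hl]
  have hinv : ℓ⁻¹ * ℓ = 1 := inv_mul_cancel₀ hl0.ne'
  nlinarith [mul_nonneg (mul_nonneg (inv_nonneg.2 hl0.le) (inv_nonneg.2 hl0.le))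
    (sub_nonneg.2 hXY), hinv]

/-- Bellman function. -/
def phi (w : ℝ → ℝ) (q : ℤ × ℤ) : ℝ :=
  dLen q * (1 - 1/(avg w q * avg (fun x => (w x)⁻¹) q))

lemma phi_nonneg (hw : ∀ x, 0 < w x) (hwi : LocallyIntegrable w volume)
    (hvi : LocallyIntegrable (fun x => (w x)⁻¹) volume) (p : ℤ × ℤ) : 0 ≤ phi w p := by
  have h1 := one_le_avg_mul hw hwi hvi p
  have h2 : 1/(avg w p * avg (fun x => (w x)⁻¹) p) ≤ 1 := by
    rw [div_le_one (by linarith)]; linarith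
  exact mul_nonneg (dLen_pos p).le (by linarith)

lemma phi_le (hw : ∀ x, 0 < w x) (hwi : LocallyIntegrable w volume)
    (hvi : LocallyIntegrable (fun x => (w x)⁻¹) volume) (p : ℤ × ℤ) : phi w p ≤ dLen p := by
  have h1 := one_le_avg_mul hw hwi hvi p
  have h2 : 0 < 1/(avg w p * avg (fun x => (w x)⁻¹) p) := by positivity
  calc phi w p ≤ dLen p * 1 := by
        apply mul_le_mul_of_nonneg_left (by linarith) (dLen_pos p).le
    _ = dLen p := mul_one _

lemma drop_eq (hw : ∀ x, 0 < w x) (hwi : LocallyIntegrable w volume)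
    (hvi : LocallyIntegrable (fun x => (w x)⁻¹) volume) (p : ℤ × ℤ) :
    phi w p - phi w (dLeft p) - phi w (dRight p)
      = dLen p * (1/(2*(avg w (dLeft p))*(avg (fun x => (w x)⁻¹) (dLeft p)))
        + 1/(2*(avg w (dRight p))*(avg (fun x => (w x)⁻¹) (dRight p)))
        - 4/((avg w (dLeft p) + avg w (dRight p)) *
            (avg (fun x => (w x)⁻¹) (dLeft p) + avg (fun x => (w x)⁻¹) (dRight p)))) := by
  have hv : ∀ x, 0 < (w x)⁻¹ := fun x => inv_pos.2 (hw x)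
  have hP := avg_pos hwi hw (dLeft p)
  have hQ := avg_pos hwi hw (dRight p)
  have hR := avg_pos hvi hv (dLeft p)
  have hS := avg_pos hvi hv (dRight p)
  have hx := avg_split hwi p
  have hy := avg_split hvi p
  have hl0 := dLen_pos p
  simp only [phi]
  rw [hx, hy, dLen_left, dLen_right]
  field_simp
  ring

lemma drop_nonneg (hw : ∀ x, 0 < w x) (hwi : LocallyIntegrable w volume)
    (hvi : LocallyIntegrable (fun x => (w x)⁻¹) volume) (p : ℤ × ℤ) :
    0 ≤ phi w p - phi w (dLeft p) - phi w (dRight p) := by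
  have hv : ∀ x, 0 < (w x)⁻¹ := fun x => inv_pos.2 (hw x)
  have hP := avg_pos hwi hw (dLeft p)
  have hQ := avg_pos hwi hw (dRight p)
  have hR := avg_pos hvi hv (dLeft p)
  have hS := avg_pos hvi hv (dRight p)
  rw [drop_eq hw hwi hvi p]
  have hkey := key_alg _ _ _ _ hP hQ hR hS
  have h0 : (0:ℝ) ≤ 2*(avg (fun x => (w x)⁻¹) (dLeft p) - avg (fun x => (w x)⁻¹) (dRight p))^2
      / ((avg w (dLeft p) + avg w (dRight p)) *
          (avg (fun x => (w x)⁻¹) (dLeft p) + avg (fun x => (w x)⁻¹) (dRight p))^3) := by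
    positivity
  exact mul_nonneg (dLen_pos p).le (le_trans h0 hkey)

lemma term_eq (hw : ∀ x, 0 < w x)
    (hvi : LocallyIntegrable (fun x => (w x)⁻¹) volume) (p : ℤ × ℤ) :
    hc (fun x => (w x)⁻¹) p ^ 2 / (avg (fun x => (w x)⁻¹) p) ^ 2
      = dLen p * (avg (fun x => (w x)⁻¹) (dLeft p) - avg (fun x => (w x)⁻¹) (dRight p))^2
          / (avg (fun x => (w x)⁻¹) (dLeft p) + avg (fun x => (w x)⁻¹) (dRight p))^2 := by
  have hv : ∀ x, 0 < (w x)⁻¹ := fun x => inv_pos.2 (hw x)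
  set R := avg (fun x => (w x)⁻¹) (dLeft p) with hRd
  set S := avg (fun x => (w x)⁻¹) (dRight p) with hSd
  have hR : 0 < R := avg_pos hvi hv (dLeft p)
  have hS : 0 < S := avg_pos hvi hv (dRight p)
  have hl0 := dLen_pos p
  have hll := dLen_pos (dLeft p)
  have hlr := dLen_pos (dRight p)
  have hIL : ∫ x in dyad (dLeft p), (w x)⁻¹
      = dLen (dLeft p) * avg (fun x => (w x)⁻¹) (dLeft p) := by
    rw [avg, ← mul_assoc, mul_inv_cancel₀ hll.ne', one_mul]
  have hIR : ∫ x in dyad (dRight p), (w x)⁻¹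
      = dLen (dRight p) * avg (fun x => (w x)⁻¹) (dRight p) := by
    rw [avg, ← mul_assoc, mul_inv_cancel₀ hlr.ne', one_mul]
  have hcv := hc_eq hvi p
  rw [hIL, hIR, dLen_left, dLen_right] at hcv
  have h1 : hc (fun x => (w x)⁻¹) p ^ 2
      = dLen p * (avg (fun x => (w x)⁻¹) (dLeft p) - avg (fun x => (w x)⁻¹) (dRight p))^2 / 4 := by
    rw [hcv, mul_pow, inv_pow, Real.sq_sqrt hl0.le]
    field_simp
    ring
  rw [h1, avg_split hvi p, ← hRd, ← hSd]
  field_simp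
  ring

lemma node_bound (hw : ∀ x, 0 < w x) (hwi : LocallyIntegrable w volume)
    (hvi : LocallyIntegrable (fun x => (w x)⁻¹) volume) (A : ℝ)
    (p : ℤ × ℤ) (hAp : avg w p * avg (fun x => (w x)⁻¹) p ≤ A) :
    hc (fun x => (w x)⁻¹) p ^ 2 / (avg (fun x => (w x)⁻¹) p) ^ 2
      ≤ 2 * A * (phi w p - phi w (dLeft p) - phi w (dRight p)) := by
  have hv : ∀ x, 0 < (w x)⁻¹ := fun x => inv_pos.2 (hw x)
  set P := avg w (dLeft p) with hPd
  set Q := avg w (dRight p) with hQd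
  set R := avg (fun x => (w x)⁻¹) (dLeft p) with hRd
  set S := avg (fun x => (w x)⁻¹) (dRight p) with hSd
  have hP : 0 < P := avg_pos hwi hw (dLeft p)
  have hQ : 0 < Q := avg_pos hwi hw (dRight p)
  have hR : 0 < R := avg_pos hvi hv (dLeft p)
  have hS : 0 < S := avg_pos hvi hv (dRight p)
  have hl0 := dLen_pos p
  have hA1 : 1 ≤ A := le_trans (one_le_avg_mul hw hwi hvi p) hAp
  have h4A : (P+Q)*(R+S) ≤ 4*A := by
    rw [avg_split hwi p, avg_split hvi p, ← hPd, ← hQd, ← hRd, ← hSd] at hAp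
    nlinarith [hAp]
  have hkey := key_alg P Q R S hP hQ hR hS
  rw [term_eq hw hvi p, drop_eq hw hwi hvi p, ← hPd, ← hQd, ← hRd, ← hSd]
  have step1 : dLen p * (R-S)^2/(R+S)^2
      ≤ 4*A*dLen p*(R-S)^2/((P+Q)*(R+S)^3) := by
    rw [div_le_div_iff₀ (by positivity) (by positivity)]
    nlinarith [mul_nonneg (sub_nonneg.2 h4A)
      (by positivity : (0:ℝ) ≤ dLen p * (R-S)^2 * (R+S)^2)]
  have step2 : 4*A*dLen p*(R-S)^2/((P+Q)*(R+S)^3)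
      = 2*A*dLen p * (2*(R-S)^2/((P+Q)*(R+S)^3)) := by ring
  have step3 : 2*A*dLen p * (2*(R-S)^2/((P+Q)*(R+S)^3))
      ≤ 2*A*dLen p * (1/(2*P*R) + 1/(2*Q*S) - 4/((P+Q)*(R+S))) :=
    mul_le_mul_of_nonneg_left hkey (by positivity)
  calc dLen p * (R-S)^2/(R+S)^2
      ≤ 4*A*dLen p*(R-S)^2/((P+Q)*(R+S)^3) := step1
    _ = 2*A*dLen p * (2*(R-S)^2/((P+Q)*(R+S)^3)) := step2
    _ ≤ 2*A*dLen p * (1/(2*P*R) + 1/(2*Q*S) - 4/((P+Q)*(R+S))) := step3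
    _ = 2*A*(dLen p * (1/(2*P*R) + 1/(2*Q*S) - 4/((P+Q)*(R+S)))) := by ring

lemma tree_bound (hw : ∀ x, 0 < w x) (hwi : LocallyIntegrable w volume)
    (hvi : LocallyIntegrable (fun x => (w x)⁻¹) volume) :
    ∀ N : ℕ, ∀ p : ℤ × ℤ, ∀ F : Finset (ℤ × ℤ),
    (∀ q ∈ F, dyad q ⊆ dyad p) → (∑ q ∈ F, (p.1 - q.1 + 1)) ≤ (N:ℤ) →
    ∑ q ∈ F, (phi w q - phi w (dLeft q) - phi w (dRight q)) ≤ phi w p := by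
  intro N
  induction N with
  | zero =>
    intro p F hsub hN
    have hF : F = ∅ := by
      by_contra hne
      obtain ⟨q, hq⟩ := Finset.nonempty_iff_ne_empty.2 hne
      have h1 : ∀ r ∈ F, (0:ℤ) ≤ p.1 - r.1 + 1 := fun r hr => by
        have := dyad_scale_le (hsub r hr); omega
      have h2 : (1:ℤ) ≤ p.1 - q.1 + 1 := by
        have := dyad_scale_le (hsub q hq); omega
      have h3 := Finset.single_le_sum h1 hq
      simp only [Nat.cast_zero] at hN
      omega
    rw [hF]
    simpa using phi_nonneg hw hwi hvi p
  | succ N ih =>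
    intro p F hsub hN
    classical
    have hterm1 : ∀ r ∈ F, (1:ℤ) ≤ p.1 - r.1 + 1 := fun r hr => by
      have := dyad_scale_le (hsub r hr); omega
    set F' := F.erase p with hF'd
    set FL := F'.filter (fun q => dyad q ⊆ dyad (dLeft p)) with hFLd
    set FR := F'.filter (fun q => ¬ dyad q ⊆ dyad (dLeft p)) with hFRd
    have hsubL : ∀ q ∈ FL, dyad q ⊆ dyad (dLeft p) := fun q hq => (Finset.mem_filter.1 hq).2
    have hsubR : ∀ q ∈ FR, dyad q ⊆ dyad (dRight p) := by
      intro q hq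
      rcases Finset.mem_filter.1 hq with ⟨hq', hnot⟩
      have hqF : q ∈ F := Finset.mem_of_mem_erase hq'
      have hne : q ≠ p := Finset.ne_of_mem_erase hq'
      rcases dyad_trichotomy (hsub q hqF) with h | h | h
      · exact absurd h hne
      · exact absurd h hnot
      · exact h
    have hmeas : ∀ (G : Finset (ℤ × ℤ)), G ⊆ F → (∀ q ∈ G, q.1 ≤ p.1 - 1) →
        (∑ q ∈ G, ((p.1 - 1) - q.1 + 1)) ≤ (N:ℤ) := by
      intro G hG hsc
      rcases G.eq_empty_or_nonempty with rfl | hne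
      · simp
      · have hcongr : ∀ q ∈ G, (p.1-1) - q.1 + 1 = (p.1 - q.1 + 1) - 1 := by intros; ring
        have h1 : ∑ q ∈ G, ((p.1-1) - q.1 + 1) = (∑ q ∈ G, (p.1 - q.1 + 1)) - G.card := by
          rw [Finset.sum_congr rfl hcongr, Finset.sum_sub_distrib, Finset.sum_const,
            nsmul_eq_mul, mul_one]
        have h2 : ∑ q ∈ G, (p.1 - q.1 + 1) ≤ ∑ q ∈ F, (p.1 - q.1 + 1) :=
          Finset.sum_le_sum_of_subset_of_nonneg hG
            (fun q hq _ => le_trans zero_le_one (hterm1 q hq))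
        have h3 : (1:ℤ) ≤ G.card := by
          exact_mod_cast Finset.card_pos.2 hne
        push_cast at hN
        omega
    have hscL : ∀ q ∈ FL, q.1 ≤ p.1 - 1 := fun q hq => dyad_sub_left_scale (hsubL q hq)
    have hscR : ∀ q ∈ FR, q.1 ≤ p.1 - 1 := fun q hq => dyad_sub_right_scale (hsubR q hq)
    have hGL : FL ⊆ F := (Finset.filter_subset _ _).trans (Finset.erase_subset _ _)
    have hGR : FR ⊆ F := (Finset.filter_subset _ _).trans (Finset.erase_subset _ _)
    have hmL := hmeas FL hGL hscL
    have hmR := hmeas FR hGR hscR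
    have hLscale : (dLeft p).1 = p.1 - 1 := rfl
    have hRscale : (dRight p).1 = p.1 - 1 := rfl
    have hL := ih (dLeft p) FL hsubL (by rw [hLscale]; exact hmL)
    have hR := ih (dRight p) FR hsubR (by rw [hRscale]; exact hmR)
    have hsplit : ∑ q ∈ F', (phi w q - phi w (dLeft q) - phi w (dRight q))
        = ∑ q ∈ FL, (phi w q - phi w (dLeft q) - phi w (dRight q))
          + ∑ q ∈ FR, (phi w q - phi w (dLeft q) - phi w (dRight q)) :=
      (Finset.sum_filter_add_sum_filter_not F' _ _).symm
    by_cases hp : p ∈ F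
    · have hsum : ∑ q ∈ F, (phi w q - phi w (dLeft q) - phi w (dRight q))
          = (phi w p - phi w (dLeft p) - phi w (dRight p))
            + ∑ q ∈ F', (phi w q - phi w (dLeft q) - phi w (dRight q)) :=
        (Finset.add_sum_erase F _ hp).symm
      rw [hsum, hsplit]
      linarith
    · have hFF : F' = F := Finset.erase_eq_of_notMem hp
      rw [← hFF, hsplit]
      have hd := drop_nonneg hw hwi hvi p
      linarith


/-- `Σ_{K⊆J} ⟨w^{-1},h_K⟩² / ⟨w^{-1}⟩_K² ≲ [w]_{A₂} |J|`. -/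
theorem statement11 :
    ∃ C : ℝ, 0 < C ∧ ∀ (w : ℝ → ℝ), (∀ x, 0 < w x) →
      LocallyIntegrable w volume → LocallyIntegrable (fun x => (w x)⁻¹) volume →
      ∀ A : ℝ, (∀ p : ℤ × ℤ, avg w p * avg (fun x => (w x)⁻¹) p ≤ A) →
      ∀ p : ℤ × ℤ, ∀ F : Finset (ℤ × ℤ), (∀ q ∈ F, dyad q ⊆ dyad p) →
        ∑ q ∈ F, (hc (fun x => (w x)⁻¹) q) ^ 2 / (avg (fun x => (w x)⁻¹) q) ^ 2 ≤
          C * A * dLen p := by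
  refine ⟨2, by norm_num, ?_⟩
  intro w hw hwi hvi A hA p F hsub
  have hA1 : 1 ≤ A := le_trans (one_le_avg_mul hw hwi hvi p) (hA p)
  have hterm : ∀ q ∈ F, hc (fun x => (w x)⁻¹) q ^ 2 / (avg (fun x => (w x)⁻¹) q) ^ 2
      ≤ 2 * A * (phi w q - phi w (dLeft q) - phi w (dRight q)) :=
    fun q _ => node_bound hw hwi hvi A q (hA q)
  have h1 := Finset.sum_le_sum hterm
  rw [← Finset.mul_sum] at h1
  have h2 := tree_bound hw hwi hvi (∑ q ∈ F, (p.1 - q.1 + 1)).toNat p F hsub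
    (Int.self_le_toNat _)
  have h3 := phi_le hw hwi hvi p
  have h2A : (0:ℝ) ≤ 2 * A := by linarith
  calc ∑ q ∈ F, hc (fun x => (w x)⁻¹) q ^ 2 / (avg (fun x => (w x)⁻¹) q) ^ 2
      ≤ 2 * A * ∑ q ∈ F, (phi w q - phi w (dLeft q) - phi w (dRight q)) := h1
    _ ≤ 2 * A * phi w p := mul_le_mul_of_nonneg_left h2 h2A
    _ ≤ 2 * A * dLen p := mul_le_mul_of_nonneg_left h3 h2A
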